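/- (Feasibility of CAoLF) Let f₁, …, f_m : ℝⁿ → ℝ, where each f_i is M_i-Lipschitz with respect to the Euclidean norm (M_i > 0), and for each i let I⁺_i, I⁻_i be disjoint subsets of coordinate indices such that f_i is nondecreasing in the j-th coordinate for every j ∈ I⁺_i and nonincreasing in the j-th coordinate for every j ∈ I⁻_i. Let the operator G_{f_i} be defined coordinatewise by G_{f_i}(x,y)_j = max(x_j − y_j, 0) if j ∈ I⁺_i, max(y_j − x_j, 0) if j ∈ I⁻_i, and x_j − y_j otherwise. Let x₁, …, x_m ∈ ℝⁿ with v_i := f_i(x_i) > 0. If x ∈ ℝⁿ and γ ≥ 0 satisfy ‖G_{f_i}(x, x_i)‖₂ ≤ γ·v_i/M_i for every i = 1, …, m, then f_i(x) ≤ (1 + γ)·v_i for every i = 1, …, m; that is, x is a relative γ-competitive solution. -/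

import Mathlib

/-- Moving from `x` to `z` coordinate by coordinate: if each single-coordinate
change does not decrease `f`, then `f x ≤ f z`. -/
lemma coord_chain {n : ℕ} (f : (Fin n → ℝ) → ℝ) (x z : Fin n → ℝ)
    (h : ∀ j (u : Fin n → ℝ),
      f (Function.update u j (x j)) ≤ f (Function.update u j (z j))) :
    f x ≤ f z := by
  suffices H : ∀ S : Finset (Fin n), f x ≤ f (fun j => if j ∈ S then z j else x j) by
    have := H Finset.univ
    simpa using this
  intro S
  induction S using Finset.induction_on with
  | empty => simp
  | @insert a s hns ih =>
    have e1 : (fun j => if j ∈ insert a s then z j else x j)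
        = Function.update (fun j => if j ∈ s then z j else x j) a (z a) := by
      funext j
      by_cases hj : j = a
      · subst hj; simp
      · simp [Function.update_of_ne hj, hj]
    have e2 : (fun j => if j ∈ s then z j else x j)
        = Function.update (fun j => if j ∈ s then z j else x j) a (x a) := by
      funext j
      by_cases hj : j = a
      · subst hj; simp [hns]
      · simp [Function.update_of_ne hj]
    calc f x ≤ f (fun j => if j ∈ s then z j else x j) := ih
    _ = f (Function.update (fun j => if j ∈ s then z j else x j) a (x a)) := by rw [← e2]
    _ ≤ f (Function.update (fun j => if j ∈ s then z j else x j) a (z a)) := h a _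
    _ = f (fun j => if j ∈ insert a s then z j else x j) := by rw [← e1]

/-- Feasibility of CAoLF: if `‖G_{fᵢ}(x, xᵢ)‖₂ ≤ γ·vᵢ/Mᵢ` for all `i`,
then `x` is a relative `γ`-competitive solution. -/
theorem stmt4 {n m : ℕ} (f : Fin m → EuclideanSpace ℝ (Fin n) → ℝ)
    (M : Fin m → ℝ) (hM : ∀ i, 0 < M i)
    (hf : ∀ i, ∀ x y : EuclideanSpace ℝ (Fin n), |f i x - f i y| ≤ M i * ‖x - y‖)
    (Ip Im : Fin m → Finset (Fin n)) (hdisj : ∀ i, Disjoint (Ip i) (Im i))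
    (hmono : ∀ i, ∀ j ∈ Ip i, ∀ u : EuclideanSpace ℝ (Fin n),
      Monotone fun t => f i (WithLp.toLp 2 (Function.update u j t)))
    (hanti : ∀ i, ∀ j ∈ Im i, ∀ u : EuclideanSpace ℝ (Fin n),
      Antitone fun t => f i (WithLp.toLp 2 (Function.update u j t)))
    (xs : Fin m → EuclideanSpace ℝ (Fin n))
    (v : Fin m → ℝ) (hv : ∀ i, v i = f i (xs i)) (hvpos : ∀ i, 0 < v i)
    (G : Fin m → EuclideanSpace ℝ (Fin n) → EuclideanSpace ℝ (Fin n) →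
      EuclideanSpace ℝ (Fin n))
    (hG : ∀ i (x y : EuclideanSpace ℝ (Fin n)) (j : Fin n),
      G i x y j = if j ∈ Ip i then max (x j - y j) 0
        else if j ∈ Im i then max (y j - x j) 0 else x j - y j)
    (x : EuclideanSpace ℝ (Fin n)) (γ : ℝ) (hγ : 0 ≤ γ)
    (hfeas : ∀ i, ‖G i x (xs i)‖ ≤ γ * v i / M i) :
    ∀ i, f i x ≤ (1 + γ) * v i := by
  intro i
  -- the comparison point z
  set z : EuclideanSpace ℝ (Fin n) := WithLp.toLp 2 (fun j => if j ∈ Ip i then max (x j) (xs i j)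
    else if j ∈ Im i then min (x j) (xs i j) else x j) with hz
  have hzj : ∀ j, z j = if j ∈ Ip i then max (x j) (xs i j)
      else if j ∈ Im i then min (x j) (xs i j) else x j := fun j => rfl
  -- f i x ≤ f i z
  have h1 : f i x ≤ f i z := by
    refine coord_chain (fun y => f i (WithLp.toLp 2 y)) x.ofLp z.ofLp ?_
    intro j u
    by_cases hp : j ∈ Ip i
    · have hx : x j ≤ z j := by rw [hzj]; simp [hp]
      exact hmono i j hp (WithLp.toLp 2 u) hx
    · by_cases hm : j ∈ Im i
      · have hx : z j ≤ x j := by rw [hzj]; simp [hp, hm]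
        exact hanti i j hm (WithLp.toLp 2 u) hx
      · have hx : z j = x j := by rw [hzj]; simp [hp, hm]
        rw [hx]
  -- ‖z - xs i‖ = ‖G i x (xs i)‖
  have h2 : ‖z - xs i‖ = ‖G i x (xs i)‖ := by
    rw [EuclideanSpace.norm_eq, EuclideanSpace.norm_eq]
    congr 1
    apply Finset.sum_congr rfl
    intro j _
    have hsub : (z - xs i) j = z j - xs i j := rfl
    rw [hsub, hG i x (xs i) j, hzj, Real.norm_eq_abs, Real.norm_eq_abs, sq_abs, sq_abs]
    by_cases hp : j ∈ Ip i
    · simp only [hp, if_true]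
      rcases le_total (x j) (xs i j) with h | h
      · rw [max_eq_right h, max_eq_right (sub_nonpos.mpr h)]; ring
      · rw [max_eq_left h, max_eq_left (sub_nonneg.mpr h)]
    · by_cases hm : j ∈ Im i
      · simp only [hp, hm, if_true, if_false]
        rcases le_total (x j) (xs i j) with h | h
        · rw [min_eq_left h, max_eq_left (sub_nonneg.mpr h)]; ring
        · rw [min_eq_right h, max_eq_right (sub_nonpos.mpr h)]; ring
      · simp [hp, hm]
  -- Lipschitz bound
  have h3 : f i z - f i (xs i) ≤ M i * ‖z - xs i‖ :=
    le_trans (le_abs_self _) (hf i z (xs i))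
  have h4 : M i * ‖z - xs i‖ ≤ γ * v i := by
    rw [h2]
    calc M i * ‖G i x (xs i)‖ ≤ M i * (γ * v i / M i) :=
      mul_le_mul_of_nonneg_left (hfeas i) (hM i).le
    _ = γ * v i := by rw [mul_div_assoc']; exact mul_div_cancel_left₀ _ (hM i).ne'
  have := hv i
  nlinarith [h1, h3, h4]
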